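/- Let w: ℤ → ℤ be the affine permutation of type Â_{n−1} given (in terms of the construction κ of the paper) by the affine permutation matrix ∑_{i=1}^s t^{νᵢ−1}E_{i,l(i)} + ∑_{i=1}^{n−s} t⁻¹E_{i+s,m(i)}, where ν₁ ≥ … ≥ ν_s is the conjugate partition attached to a composition λ of n, and l(1)<…<l(s) enumerate the 'Red' entries and m(1),…,m(n−s) the 'Blue' entries as in the paper. Then the length of κ equals 2·dim(G/P) + ∑_{k'<k} #Row(k)·#Blue(k'), where dim(G/P) = (n² − ∑λᵢ²)/2. -/

import Mathlib

open Finset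

section helpers

lemma period_gen (n : ℕ) (κ : ℤ → ℤ) (h : ∀ x : ℤ, κ (x + n) = κ x + n) :
    ∀ (k x : ℤ), κ (x + k * n) = κ x + k * n := by
  have h' : ∀ x : ℤ, κ (x - n) = κ x - n := fun x => by
    have := h (x - n); rw [sub_add_cancel] at this; omega
  intro k
  induction k using Int.induction_on with
  | zero => intro x; simp
  | succ i ih =>
      intro x
      have e : x + ((i : ℤ) + 1) * n = (x + i * n) + n := by ring
      rw [e, h, ih]; ring
  | pred i ih =>
      intro x
      have e : x + (-(i : ℤ) - 1) * n = (x + -(i:ℤ) * n) - n := by ring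
      rw [e, h', ih]; ring

lemma sum_odd_sq (M : ℕ) : ∑ i ∈ Finset.Icc 1 M, (2 * i - 1) = M ^ 2 := by
  induction M with
  | zero => simp
  | succ M ih =>
      rw [Finset.sum_Icc_succ_top (by omega : 1 ≤ M + 1), ih]
      have : (M + 1) ^ 2 = M ^ 2 + 2 * M + 1 := by ring
      omega

lemma ediv_eval1 (N c q : ℤ) (hN : 0 < N) (h0 : 0 ≤ c) (h1 : c < N) :
    (c + q * N) / N = q := by
  rw [Int.add_mul_ediv_right _ _ (by omega : N ≠ 0), Int.ediv_eq_zero_of_lt h0 h1, zero_add]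

lemma ediv_eval2 (N c q : ℤ) (hN : 0 < N) (h0 : -N ≤ c) (h1 : c < 0) :
    (c + q * N) / N = q - 1 := by
  have e : c + q * N = (c + N) + (q - 1) * N := by ring
  rw [e, ediv_eval1 N _ _ hN (by omega) (by omega)]

lemma card_filter_fin_lt (r k : ℕ) (hk : k ≤ r) :
    (Finset.univ.filter (fun k' : Fin r => (k' : ℕ) < k)).card = k := by
  rw [← Finset.card_range k]
  apply Finset.card_bij (fun (i : Fin r) _ => (i : ℕ))
  · intro a ha
    simp only [Finset.mem_filter] at ha
    simpa using ha.2
  · intro a ha b hb h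
    exact Fin.ext h
  · intro b hb
    simp only [Finset.mem_range] at hb
    exact ⟨⟨b, by omega⟩, by simp [hb], rfl⟩

end helpers

/-- The Coxeter length of an affine permutation `w : ℤ → ℤ` of type Â_{n−1}. -/
noncomputable def affLength (n : ℕ) (w : ℤ → ℤ) : ℕ :=
  Nat.card {p : ℤ × ℤ // 1 ≤ p.1 ∧ p.1 ≤ (n : ℤ) ∧ p.1 < p.2 ∧ w p.2 < w p.1}

lemma count_lemma (n : ℕ) (hn : 0 < n) (κ : ℤ → ℤ)
    (hper : ∀ x : ℤ, κ (x + n) = κ x + n)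
    (U Lo : ℤ) (hub : ∀ x : ℤ, 1 ≤ x → x ≤ n → κ x ≤ U)
    (hlb : ∀ x : ℤ, 1 ≤ x → x ≤ n → Lo ≤ κ x) :
    affLength n κ = ∑ a ∈ Finset.Icc (1:ℤ) n, ∑ b ∈ Finset.Icc (1:ℤ) n,
      ((κ a - κ b - 1) / n + 1 - (if b ≤ a then 1 else 0)).toNat := by
  set N : ℤ := (n : ℤ) with hNdef
  have hN : 0 < N := by rw [hNdef]; exact_mod_cast hn
  have hgen := period_gen n κ hper
  set Ks : ℤ := (U - Lo) / N + 1 with hKsdef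
  have hKs : U - Lo < Ks * N := Int.lt_ediv_add_one_mul_self _ hN
  set F0 : Finset (ℤ × ℤ) :=
    (Finset.Icc (1:ℤ) N ×ˢ Finset.Icc (2:ℤ) (Ks * N)).filter
      (fun p => p.1 < p.2 ∧ κ p.2 < κ p.1) with hF0
  have hset : {p : ℤ × ℤ | 1 ≤ p.1 ∧ p.1 ≤ N ∧ p.1 < p.2 ∧ κ p.2 < κ p.1} = ↑F0 := by
    ext ⟨x, y⟩
    simp only [hF0, Finset.coe_filter, Set.mem_setOf_eq, Finset.mem_product, Finset.mem_Icc,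
      Set.mem_setOf_eq, Finset.mem_coe, Finset.mem_filter]
    constructor
    · rintro ⟨h1, h2, h3, h4⟩
      refine ⟨⟨⟨h1, h2⟩, ?_, ?_⟩, h3, h4⟩
      · omega
      · -- y ≤ Ks * N
        set b : ℤ := (y - 1) % N + 1 with hb
        set k : ℤ := (y - 1) / N with hk
        have hbm : 0 ≤ (y - 1) % N := Int.emod_nonneg _ (by omega)
        have hbl : (y - 1) % N < N := Int.emod_lt_of_pos _ hN
        have hy : y = b + k * N := by
          have h0 := Int.mul_ediv_add_emod (y - 1) N
          rw [mul_comm] at h0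
          rw [← hk] at h0
          omega
        have hky : κ y = κ b + k * N := by rw [hy]; exact hgen k b
        have hκb : Lo ≤ κ b := hlb b (by omega) (by omega)
        have hκx : κ x ≤ U := hub x h1 h2
        have hkN : k * N < U - Lo := by omega
        have hkKs : k < Ks := lt_of_mul_lt_mul_right (by omega) (le_of_lt hN)
        have : k * N ≤ (Ks - 1) * N := mul_le_mul_of_nonneg_right (by omega) (le_of_lt hN)
        have hbN : b ≤ N := by omega
        nlinarith
    · rintro ⟨⟨⟨h1, h2⟩, _, _⟩, h3, h4⟩
      exact ⟨h1, h2, h3, h4⟩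
  have step1 : affLength n κ = F0.card := by
    have h1 : affLength n κ =
        Set.ncard {p : ℤ × ℤ | 1 ≤ p.1 ∧ p.1 ≤ N ∧ p.1 < p.2 ∧ κ p.2 < κ p.1} :=
      Nat.card_coe_set_eq _
    rw [h1, hset, Set.ncard_coe_finset]
  rw [step1]
  have hmap : ∀ p ∈ F0, (p.1, (p.2 - 1) % N + 1) ∈ Finset.Icc (1:ℤ) N ×ˢ Finset.Icc (1:ℤ) N := by
    rintro ⟨x, y⟩ hp
    simp only [hF0, Finset.mem_filter, Finset.mem_product, Finset.mem_Icc] at hp ⊢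
    have hbm : 0 ≤ (y - 1) % N := Int.emod_nonneg _ (by omega)
    have hbl : (y - 1) % N < N := Int.emod_lt_of_pos _ hN
    exact ⟨⟨hp.1.1.1, hp.1.1.2⟩, by omega, by omega⟩
  rw [Finset.card_eq_sum_card_fiberwise hmap, Finset.sum_product]
  refine Finset.sum_congr rfl fun a ha => Finset.sum_congr rfl fun b hb => ?_
  simp only [Finset.mem_Icc] at ha hb
  have hfib : F0.filter (fun p => (p.1, (p.2 - 1) % N + 1) = (a, b)) =
      (Finset.Icc (if b ≤ a then 1 else 0) ((κ a - κ b - 1) / N)).image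
        (fun k => (a, b + k * N)) := by
    ext ⟨x, y⟩
    simp only [hF0, Finset.mem_filter, Finset.mem_product, Finset.mem_Icc, Finset.mem_image,
      Prod.mk.injEq]
    constructor
    · rintro ⟨⟨⟨⟨hx1, hx2⟩, hy1, hy2⟩, hxy, hκ⟩, hxa, hyb⟩
      subst hxa
      set k : ℤ := (y - 1) / N with hk
      have hbm : 0 ≤ (y - 1) % N := Int.emod_nonneg _ (by omega)
      have hbl : (y - 1) % N < N := Int.emod_lt_of_pos _ hN
      have hy : y = b + k * N := by
        have h0 := Int.mul_ediv_add_emod (y - 1) N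
        rw [mul_comm] at h0
        rw [← hk] at h0
        omega
      have hky : κ y = κ b + k * N := by rw [hy]; exact hgen k b
      refine ⟨k, ⟨?_, ?_⟩, rfl, by omega⟩
      · by_cases hba : b ≤ x
        · simp only [if_pos hba]
          by_contra hc
          push_neg at hc
          have hk0 : k ≤ 0 := by omega
          have : k * N ≤ 0 := mul_nonpos_of_nonpos_of_nonneg hk0 (le_of_lt hN)
          omega
        · simp only [if_neg hba]
          exact Int.ediv_nonneg (by omega) (le_of_lt hN)
      · rw [Int.le_ediv_iff_mul_le hN]; omega
    · rintro ⟨k, ⟨hk0, hkK⟩, hxa, hyk⟩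
      subst hxa; subst hyk
      have hb1 : 1 ≤ b := hb.1
      have hbN : b ≤ N := hb.2
      have ha1 : 1 ≤ a := ha.1
      have haN : a ≤ N := ha.2
      have hky : κ (b + k * N) = κ b + k * N := hgen k b
      have hKN : ((κ a - κ b - 1) / N) * N ≤ κ a - κ b - 1 := Int.ediv_mul_le _ (by omega)
      have hkKN : k * N ≤ ((κ a - κ b - 1) / N) * N :=
        mul_le_mul_of_nonneg_right hkK (le_of_lt hN)
      have hκlt : κ (b + k * N) < κ a := by omega
      have hknn : 0 ≤ k := by
        by_cases hba : b ≤ a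
        · simp only [if_pos hba] at hk0; omega
        · simpa [if_neg hba] using hk0
      have hkNnn : 0 ≤ k * N := mul_nonneg hknn (le_of_lt hN)
      have hlt : a < b + k * N := by
        by_cases hba : b ≤ a
        · simp only [if_pos hba] at hk0
          have : 1 * N ≤ k * N := mul_le_mul_of_nonneg_right hk0 (le_of_lt hN)
          omega
        · push_neg at hba; omega
      have hyub : b + k * N ≤ Ks * N := by
        have hκb : Lo ≤ κ b := hlb b (by omega) (by omega)
        have hκa : κ a ≤ U := hub a ha1 haN
        have hkN : k * N < U - Lo := by omega
        have hkKs : k < Ks := lt_of_mul_lt_mul_right (by omega) (le_of_lt hN)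
        have : k * N ≤ (Ks - 1) * N := mul_le_mul_of_nonneg_right (by omega) (le_of_lt hN)
        nlinarith
      refine ⟨⟨⟨⟨ha1, haN⟩, by omega, hyub⟩, hlt, hκlt⟩, rfl, ?_⟩
      have : (b + k * N - 1) % N = (b - 1) % N := by
        have : b + k * N - 1 = (b - 1) + N * k := by ring
        rw [this, Int.add_mul_emod_self_left]
      rw [this, Int.emod_eq_of_lt (by omega) (by omega)]
      omega
  rw [hfib, Finset.card_image_of_injective _ (fun k1 k2 h => by
      simp only [Prod.mk.injEq] at h
      have := h.2
      have hN' : N ≠ 0 := by omega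
      exact mul_right_cancel₀ hN' (by omega)), Int.card_Icc]

/-- the length of the affine permutation κ (given by
∑ t^{νᵢ−1}E_{i,l(i)} + ∑ t⁻¹E_{i+s,m(i)}) equals
2·dim(G/P) + ∑_{k'<k} #Row(k)·#Blue(k'), where 2·dim(G/P) = n² − ∑λᵢ².
Here λ is a composition of n, d its partial sums, Row(k) = (d_k, d_{k+1}] (0-based k),
Red(k) the #S₁(k) smallest entries of Row(k), Blue(k) the rest, ν the conjugate
partition, s = max λ, l the increasing enumeration of Red, and m the enumeration of
Blue row by row from bottom to top, each row left to right. -/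
theorem length_of_kappa (n r : ℕ) (hr : 0 < r) (lam : Fin r → ℕ)
    (hpos : ∀ i, 0 < lam i) (hsum : ∑ i, lam i = n)
    (d : ℕ → ℕ)
    (hd : ∀ k : ℕ, d k = ∑ j ∈ Finset.univ.filter (fun j : Fin r => (j : ℕ) < k), lam j)
    (Row : ℕ → Finset ℕ) (hRow : ∀ k, Row k = Finset.Ioc (d k) (d (k + 1)))
    (maxprev : ℕ → ℕ)
    (hmp : ∀ k : ℕ, maxprev k = (Finset.univ.filter (fun j : Fin r => (j : ℕ) < k)).sup lam)
    (Red : ℕ → Finset ℕ) (hRed : ∀ k, Red k = Finset.Ioc (d k) (d (k + 1) - maxprev k))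
    (Blue : ℕ → Finset ℕ) (hBlue : ∀ k, Blue k = Row k \ Red k)
    (s : ℕ) (hs : s = Finset.univ.sup lam)
    (ν : ℕ → ℕ)
    (hν : ∀ i : ℕ, ν i = (Finset.univ.filter (fun j : Fin r => i ≤ lam j)).card)
    (rowOf : ℕ → ℕ)
    (hrowOf : ∀ x : ℕ, rowOf x = (Finset.univ.filter (fun k : Fin r => d ((k : ℕ) + 1) < x)).card)
    (l : ℕ → ℕ)
    (hlmono : ∀ i j : ℕ, 1 ≤ i → i < j → j ≤ s → l i < l j)
    (hlrange : (Finset.Icc 1 s).image l = (Finset.range r).biUnion Red)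
    (m : ℕ → ℕ)
    (hminj : ∀ i ∈ Finset.Icc 1 (n - s), ∀ j ∈ Finset.Icc 1 (n - s), m i = m j → i = j)
    (hmrange : (Finset.Icc 1 (n - s)).image m = (Finset.range r).biUnion Blue)
    (hmorder : ∀ i ∈ Finset.Icc 1 (n - s), ∀ j ∈ Finset.Icc 1 (n - s),
      (i < j ↔ (rowOf (m j) < rowOf (m i) ∨ (rowOf (m i) = rowOf (m j) ∧ m i < m j))))
    (κ : ℤ → ℤ)
    (hκper : ∀ x : ℤ, κ (x + n) = κ x + n)
    (hκl : ∀ i : ℕ, 1 ≤ i → i ≤ s → κ (l i) = (i : ℤ) - ((ν i : ℤ) - 1) * n)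
    (hκm : ∀ i : ℕ, 1 ≤ i → i ≤ n - s → κ (m i) = ((i : ℤ) + s) + n) :
    affLength n κ = (n ^ 2 - ∑ i, (lam i) ^ 2)
      + ∑ p ∈ (Finset.range r ×ˢ Finset.range r).filter (fun p => p.2 < p.1),
          (Row p.1).card * (Blue p.2).card := by
  -- basic facts
  have hn : 0 < n := by
    rw [← hsum]
    exact Finset.sum_pos (fun i _ => hpos i) ⟨⟨0, hr⟩, Finset.mem_univ _⟩
  have hlam_le_n : ∀ j, lam j ≤ n := fun j => by
    rw [← hsum]; exact Finset.single_le_sum (fun i _ => Nat.zero_le _) (Finset.mem_univ j)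
  have hlam_le_s : ∀ j, lam j ≤ s := fun j => by rw [hs]; exact Finset.le_sup (Finset.mem_univ j)
  have hsn : s ≤ n := by
    rw [hs]; exact Finset.sup_le fun j _ => hlam_le_n j
  have hspos : 0 < s := by
    rw [hs]
    exact lt_of_lt_of_le (hpos ⟨0, hr⟩) (Finset.le_sup (Finset.mem_univ _))
  have d0 : d 0 = 0 := by simp [hd]
  have dr : d r = n := by
    rw [hd, ← hsum]
    congr 1
    exact Finset.filter_true_of_mem fun j _ => j.isLt
  have dmono : Monotone d := by
    intro k k' hkk
    rw [hd, hd]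
    exact Finset.sum_le_sum_of_subset (by
      intro j hj
      simp only [Finset.mem_filter, Finset.mem_univ, true_and] at hj ⊢
      omega)
  have dsucc : ∀ k (hk : k < r), d (k + 1) = d k + lam ⟨k, hk⟩ := by
    intro k hk
    rw [hd, hd]
    have he : Finset.univ.filter (fun j : Fin r => (j : ℕ) < k + 1) =
        insert ⟨k, hk⟩ (Finset.univ.filter (fun j : Fin r => (j : ℕ) < k)) := by
      ext j
      simp only [Finset.mem_filter, Finset.mem_univ, true_and, Finset.mem_insert, Fin.ext_iff]
      omega
    rw [he, Finset.sum_insert (by simp)]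
    omega
  have hRowcard : ∀ k (hk : k < r), (Row k).card = lam ⟨k, hk⟩ := by
    intro k hk
    rw [hRow, Nat.card_Ioc, dsucc k hk]
    omega
  have hRedSub : ∀ k, Red k ⊆ Row k := by
    intro k
    rw [hRed, hRow]
    exact Finset.Ioc_subset_Ioc_right (Nat.sub_le _ _)
  have hBlueSub : ∀ k, Blue k ⊆ Row k := by
    intro k; rw [hBlue]; exact Finset.sdiff_subset
  have hcardRB : ∀ k, (Blue k).card + (Red k).card = (Row k).card := by
    intro k; rw [hBlue]; exact Finset.card_sdiff_add_card_eq_card (hRedSub k)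
  have hRowdisj : ∀ k k', k ≠ k' → Disjoint (Row k) (Row k') := by
    intro k k' hkk
    rw [Finset.disjoint_left]
    intro x hx hx'
    rw [hRow, Finset.mem_Ioc] at hx hx'
    rcases lt_or_gt_of_ne hkk with h | h
    · have := dmono (by omega : k + 1 ≤ k'); omega
    · have := dmono (by omega : k' + 1 ≤ k); omega
  have hRowUnionGen : ∀ K, (Finset.range K).biUnion (fun k => Finset.Ioc (d k) (d (k+1)))
      = Finset.Ioc (d 0) (d K) := by
    intro K
    induction K with
    | zero => simp
    | succ K ih =>
        rw [Finset.range_add_one, Finset.biUnion_insert, ih, Finset.union_comm,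
          Finset.Ioc_union_Ioc_eq_Ioc (dmono (Nat.zero_le K)) (dmono (Nat.le_succ K))]
  have hRowUnion : (Finset.range r).biUnion Row = Finset.Icc 1 n := by
    have : (Finset.range r).biUnion Row = (Finset.range r).biUnion
        (fun k => Finset.Ioc (d k) (d (k+1))) := by
      apply Finset.biUnion_congr rfl
      intro k _; rw [hRow]
    rw [this, hRowUnionGen, d0, dr]
    ext x; simp; omega
  -- membership row uniqueness
  have hRowuniq : ∀ k k' x, x ∈ Row k → x ∈ Row k' → k = k' := by
    intro k k' x hx hx'
    by_contra hne
    exact Finset.disjoint_left.mp (hRowdisj k k' hne) hx hx'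
  -- blue characterization
  have hBlueMem : ∀ k x, x ∈ Blue k ↔ (d k < x ∧ x ≤ d (k+1) ∧ d (k+1) - maxprev k < x) := by
    intro k x
    rw [hBlue, Finset.mem_sdiff, hRow, hRed, Finset.mem_Ioc, Finset.mem_Ioc]
    constructor
    · rintro ⟨⟨h1, h2⟩, h3⟩
      refine ⟨h1, h2, ?_⟩
      by_contra hc; push_neg at hc
      exact h3 ⟨h1, hc⟩
    · rintro ⟨h1, h2, h3⟩
      exact ⟨⟨h1, h2⟩, fun h => by omega⟩
  have hRedMem : ∀ k x, x ∈ Red k ↔ (d k < x ∧ x ≤ d (k+1) - maxprev k) := by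
    intro k x; rw [hRed, Finset.mem_Ioc]
  -- blue-red comparison
  have hblt : ∀ k k' x y, k < r → k' < r → x ∈ Blue k → y ∈ Red k' → (x < y ↔ k < k') := by
    intro k k' x y hk hk' hx hy
    rw [hBlueMem] at hx
    rw [hRedMem] at hy
    constructor
    · intro hxy
      by_contra hc
      push_neg at hc
      rcases Nat.lt_or_ge k' k with h | h
      · have := dmono (by omega : k' + 1 ≤ k); omega
      · have : k' = k := by omega
        subst this; omega
    · intro hkk
      have := dmono (by omega : k + 1 ≤ k'); omega
  -- blue-blue row comparison
  have hbblt : ∀ k k' x y, k < r → k' < r → x ∈ Blue k → y ∈ Blue k' → (x < y → k ≤ k') := by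
    intro k k' x y hk hk' hx hy hxy
    by_contra hc
    push_neg at hc
    rw [hBlueMem] at hx hy
    have := dmono (by omega : k' + 1 ≤ k); omega
  -- rowOf on a row
  have hrowval : ∀ k (hk : k < r) x, x ∈ Row k → rowOf x = k := by
    intro k hk x hx
    rw [hRow, Finset.mem_Ioc] at hx
    rw [hrowOf]
    have he : Finset.univ.filter (fun k' : Fin r => d ((k' : ℕ) + 1) < x) =
        Finset.univ.filter (fun k' : Fin r => (k' : ℕ) < k) := by
      ext k'
      simp only [Finset.mem_filter, Finset.mem_univ, true_and]
      constructor
      · intro h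
        by_contra hc
        push_neg at hc
        have := dmono (by omega : k + 1 ≤ (k' : ℕ) + 1); omega
      · intro h
        have := dmono (by omega : (k' : ℕ) + 1 ≤ k); omega
    rw [he]
    exact card_filter_fin_lt r k (le_of_lt hk)
  set Rset : Finset ℕ := (Finset.range r).biUnion Red with hRset
  set Bset : Finset ℕ := (Finset.range r).biUnion Blue with hBset
  have hRsub : Rset ⊆ Finset.Icc 1 n := by
    rw [hRset, ← hRowUnion]
    intro x hx
    simp only [Finset.mem_biUnion, Finset.mem_range] at hx ⊢
    obtain ⟨k, hk, hxk⟩ := hx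
    exact ⟨k, hk, hRedSub k hxk⟩
  have hBsub : Bset ⊆ Finset.Icc 1 n := by
    rw [hBset, ← hRowUnion]
    intro x hx
    simp only [Finset.mem_biUnion, Finset.mem_range] at hx ⊢
    obtain ⟨k, hk, hxk⟩ := hx
    exact ⟨k, hk, hBlueSub k hxk⟩
  have hRBdisj : Disjoint Rset Bset := by
    rw [Finset.disjoint_left]
    intro x hx hx'
    simp only [hRset, hBset, Finset.mem_biUnion, Finset.mem_range] at hx hx'
    obtain ⟨k, hk, hxk⟩ := hx
    obtain ⟨k', hk', hxk'⟩ := hx'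
    have : k = k' := hRowuniq k k' x (hRedSub k hxk) (hBlueSub k' hxk')
    subst this
    rw [hBlue, Finset.mem_sdiff] at hxk'
    exact hxk'.2 hxk
  have hRBunion : Rset ∪ Bset = Finset.Icc 1 n := by
    apply Finset.Subset.antisymm (Finset.union_subset hRsub hBsub)
    rw [← hRowUnion]
    intro x hx
    simp only [Finset.mem_biUnion, Finset.mem_range] at hx
    obtain ⟨k, hk, hxk⟩ := hx
    rw [Finset.mem_union]
    by_cases hred : x ∈ Red k
    · exact Or.inl (by simp only [hRset, Finset.mem_biUnion, Finset.mem_range]; exact ⟨k, hk, hred⟩)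
    · refine Or.inr (by
        simp only [hBset, Finset.mem_biUnion, Finset.mem_range]
        exact ⟨k, hk, by rw [hBlue, Finset.mem_sdiff]; exact ⟨hxk, hred⟩⟩)
  -- l and m facts
  have hlinj : ∀ i ∈ Finset.Icc 1 s, ∀ j ∈ Finset.Icc 1 s, l i = l j → i = j := by
    intro i hi j hj h
    simp only [Finset.mem_Icc] at hi hj
    by_contra hne
    rcases lt_or_gt_of_ne hne with hlt | hlt
    · have := hlmono i j hi.1 hlt hj.2; omega
    · have := hlmono j i hj.1 hlt hi.2; omega
  have hl_le_iff : ∀ i ∈ Finset.Icc 1 s, ∀ j ∈ Finset.Icc 1 s, (l j ≤ l i ↔ j ≤ i) := by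
    intro i hi j hj
    simp only [Finset.mem_Icc] at hi hj
    constructor
    · intro h
      by_contra hc
      push_neg at hc
      have := hlmono i j hi.1 hc hj.2; omega
    · intro h
      rcases Nat.lt_or_ge j i with hlt | hge
      · exact le_of_lt (hlmono j i hj.1 hlt hi.2)
      · have : i = j := by omega
        subst this; exact le_rfl
  have hlmem : ∀ i ∈ Finset.Icc 1 s, l i ∈ Rset := by
    intro i hi
    rw [← hlrange]
    exact Finset.mem_image_of_mem l hi
  have hmmem : ∀ i ∈ Finset.Icc 1 (n - s), m i ∈ Bset := by
    intro i hi
    rw [← hmrange]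
    exact Finset.mem_image_of_mem m hi
  -- ν facts
  have hνanti : ∀ i j, i ≤ j → ν j ≤ ν i := by
    intro i j hij
    rw [hν, hν]
    apply Finset.card_le_card
    intro x hx
    simp only [Finset.mem_filter, Finset.mem_univ, true_and] at hx ⊢
    omega
  have hνpos : ∀ i, i ≤ s → 1 ≤ ν i := by
    intro i hi
    rw [hν]
    rw [Nat.one_le_iff_ne_zero, ← Nat.pos_iff_ne_zero, Finset.card_pos]
    obtain ⟨j, _, hj⟩ := Finset.exists_mem_eq_sup Finset.univ
      ⟨⟨0, hr⟩, Finset.mem_univ _⟩ lam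
    exact ⟨j, by simp only [Finset.mem_filter, Finset.mem_univ, true_and]; omega⟩
  have hνler : ∀ i, ν i ≤ r := by
    intro i
    rw [hν]
    calc (Finset.univ.filter (fun j : Fin r => i ≤ lam j)).card
        ≤ (Finset.univ : Finset (Fin r)).card := Finset.card_filter_le _ _
      _ = r := by simp
  have hfilterIcc : ∀ j, (Finset.Icc 1 s).filter (fun i => i ≤ lam j) = Finset.Icc 1 (lam j) := by
    intro j
    ext x
    simp only [Finset.mem_filter, Finset.mem_Icc]
    have := hlam_le_s j
    omega
  have hνsum : ∑ i ∈ Finset.Icc 1 s, ν i = n := by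
    calc ∑ i ∈ Finset.Icc 1 s, ν i
        = ∑ i ∈ Finset.Icc 1 s, ∑ j : Fin r, if i ≤ lam j then 1 else 0 := by
          refine Finset.sum_congr rfl fun i _ => ?_
          rw [hν, Finset.card_filter]
      _ = ∑ j : Fin r, ∑ i ∈ Finset.Icc 1 s, if i ≤ lam j then 1 else 0 := Finset.sum_comm
      _ = ∑ j : Fin r, lam j := by
          refine Finset.sum_congr rfl fun j _ => ?_
          rw [← Finset.sum_filter, hfilterIcc j, Finset.sum_const, smul_eq_mul, mul_one,
            Nat.card_Icc]
          omega
      _ = n := hsum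
  have hνsq : ∑ i ∈ Finset.Icc 1 s, (2 * i - 1) * ν i = ∑ j, lam j ^ 2 := by
    calc ∑ i ∈ Finset.Icc 1 s, (2 * i - 1) * ν i
        = ∑ i ∈ Finset.Icc 1 s, ∑ j : Fin r, (if i ≤ lam j then (2 * i - 1) else 0) := by
          refine Finset.sum_congr rfl fun i _ => ?_
          rw [hν, ← Finset.sum_filter, Finset.sum_const, smul_eq_mul, mul_comm]
      _ = ∑ j : Fin r, ∑ i ∈ Finset.Icc 1 s, (if i ≤ lam j then (2 * i - 1) else 0) :=
          Finset.sum_comm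
      _ = ∑ j : Fin r, lam j ^ 2 := by
          refine Finset.sum_congr rfl fun j _ => ?_
          rw [← Finset.sum_filter, hfilterIcc j, sum_odd_sq]
  -- rowOf monotone
  have hrowmono : ∀ x y : ℕ, x ≤ y → rowOf x ≤ rowOf y := by
    intro x y hxy
    rw [hrowOf, hrowOf]
    apply Finset.card_le_card
    intro k hk
    simp only [Finset.mem_filter, Finset.mem_univ, true_and] at hk ⊢
    omega
  -- coverage of positions
  have hcover : ∀ x : ℕ, x ∈ Finset.Icc 1 n →
      (∃ i ∈ Finset.Icc 1 s, l i = x) ∨ (∃ i ∈ Finset.Icc 1 (n - s), m i = x) := by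
    intro x hx
    rw [← hRBunion, Finset.mem_union] at hx
    rcases hx with h | h
    · left; rw [← hlrange] at h; simpa [Finset.mem_image] using h
    · right; rw [← hmrange] at h; simpa [Finset.mem_image] using h
  -- bounds on κ
  have hub : ∀ x : ℤ, 1 ≤ x → x ≤ (n:ℤ) → κ x ≤ 2 * (n:ℤ) := by
    intro x h1 h2
    obtain ⟨x', rfl⟩ : ∃ x' : ℕ, (x' : ℤ) = x := ⟨x.toNat, by omega⟩
    have hx' : x' ∈ Finset.Icc 1 n := by rw [Finset.mem_Icc]; omega
    rcases hcover x' hx' with ⟨i, hi, rfl⟩ | ⟨i, hi, rfl⟩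
    · rw [Finset.mem_Icc] at hi
      rw [hκl i hi.1 hi.2]
      have h3 : 1 ≤ ν i := hνpos i hi.2
      have h4 : (0:ℤ) ≤ ((ν i : ℤ) - 1) * n := by
        apply mul_nonneg _ (by positivity)
        have : (1:ℤ) ≤ (ν i : ℤ) := by exact_mod_cast h3
        linarith
      have h5 : (i : ℤ) ≤ n := by exact_mod_cast le_trans hi.2 hsn
      linarith
    · rw [Finset.mem_Icc] at hi
      rw [hκm i hi.1 hi.2]
      have h5 : i + s ≤ n := by omega
      have h5' : (i : ℤ) + s ≤ n := by exact_mod_cast h5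
      linarith
  have hlb : ∀ x : ℤ, 1 ≤ x → x ≤ (n:ℤ) → 1 - ((r:ℤ) - 1) * n ≤ κ x := by
    intro x h1 h2
    obtain ⟨x', rfl⟩ : ∃ x' : ℕ, (x' : ℤ) = x := ⟨x.toNat, by omega⟩
    have hx' : x' ∈ Finset.Icc 1 n := by rw [Finset.mem_Icc]; omega
    rcases hcover x' hx' with ⟨i, hi, rfl⟩ | ⟨i, hi, rfl⟩
    · rw [Finset.mem_Icc] at hi
      rw [hκl i hi.1 hi.2]
      have h3 : ν i ≤ r := hνler i
      have h4 : ((ν i : ℤ) - 1) * n ≤ ((r:ℤ) - 1) * n := by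
        apply mul_le_mul_of_nonneg_right _ (by positivity)
        have : (ν i : ℤ) ≤ r := by exact_mod_cast h3
        linarith
      have h5 : (1:ℤ) ≤ i := by exact_mod_cast hi.1
      linarith
    · rw [Finset.mem_Icc] at hi
      rw [hκm i hi.1 hi.2]
      have h4 : (0:ℤ) ≤ ((r:ℤ) - 1) * n := by
        apply mul_nonneg _ (by positivity)
        have : (1:ℤ) ≤ r := by exact_mod_cast hr
        linarith
      have h5 : (1:ℤ) ≤ i := by exact_mod_cast hi.1
      have h6 : (0:ℤ) ≤ s := by positivity
      have h7 : (0:ℤ) ≤ n := by positivity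
      linarith
  -- apply the master counting lemma
  set G : ℕ → ℕ → ℕ := fun a b =>
    ((κ a - κ b - 1) / (n:ℤ) + 1 - if (b:ℤ) ≤ (a:ℤ) then 1 else 0).toNat with hG
  have hIccCast : Finset.Icc (1:ℤ) (n:ℤ) = (Finset.Icc 1 n).image (fun x : ℕ => (x:ℤ)) := by
    ext x
    simp only [Finset.mem_Icc, Finset.mem_image]
    constructor
    · intro hx
      exact ⟨x.toNat, ⟨by omega, by omega⟩, by omega⟩
    · rintro ⟨y, hy, rfl⟩
      omega
  have castinj : ∀ x ∈ Finset.Icc 1 n, ∀ y ∈ Finset.Icc 1 n, (x:ℤ) = (y:ℤ) → x = y :=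
    fun x _ y _ h => by exact_mod_cast h
  have hmain : affLength n κ = ∑ a ∈ Finset.Icc 1 n, ∑ b ∈ Finset.Icc 1 n, G a b := by
    rw [count_lemma n hn κ hκper (2 * (n:ℤ)) (1 - ((r:ℤ) - 1) * n) hub hlb, hIccCast,
      Finset.sum_image castinj]
    refine Finset.sum_congr rfl fun a _ => ?_
    rw [Finset.sum_image castinj]
  -- split the double sum into four pieces
  have hRsum : ∀ f : ℕ → ℕ, ∑ x ∈ Rset, f x = ∑ i ∈ Finset.Icc 1 s, f (l i) := by
    intro f
    rw [← hlrange, Finset.sum_image hlinj]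
  have hBsum : ∀ f : ℕ → ℕ, ∑ x ∈ Bset, f x = ∑ i ∈ Finset.Icc 1 (n - s), f (m i) := by
    intro f
    rw [← hmrange, Finset.sum_image hminj]
  have hsplit : affLength n κ =
      ((∑ i ∈ Finset.Icc 1 s, ∑ j ∈ Finset.Icc 1 s, G (l i) (l j))
        + (∑ i ∈ Finset.Icc 1 s, ∑ j ∈ Finset.Icc 1 (n - s), G (l i) (m j)))
      + ((∑ i ∈ Finset.Icc 1 (n - s), ∑ j ∈ Finset.Icc 1 s, G (m i) (l j))
        + (∑ i ∈ Finset.Icc 1 (n - s), ∑ j ∈ Finset.Icc 1 (n - s), G (m i) (m j))) := by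
    rw [hmain]
    have inner : ∀ a, ∑ b ∈ Finset.Icc 1 n, G a b
        = ∑ b ∈ Rset, G a b + ∑ b ∈ Bset, G a b := by
      intro a
      rw [← hRBunion, Finset.sum_union hRBdisj]
    calc ∑ a ∈ Finset.Icc 1 n, ∑ b ∈ Finset.Icc 1 n, G a b
        = ∑ a ∈ Finset.Icc 1 n, (∑ b ∈ Rset, G a b + ∑ b ∈ Bset, G a b) :=
          Finset.sum_congr rfl fun a _ => inner a
      _ = (∑ a ∈ Finset.Icc 1 n, ∑ b ∈ Rset, G a b)
          + ∑ a ∈ Finset.Icc 1 n, ∑ b ∈ Bset, G a b := Finset.sum_add_distrib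
      _ = ((∑ a ∈ Rset, ∑ b ∈ Rset, G a b) + ∑ a ∈ Bset, ∑ b ∈ Rset, G a b)
          + ((∑ a ∈ Rset, ∑ b ∈ Bset, G a b) + ∑ a ∈ Bset, ∑ b ∈ Bset, G a b) := by
          rw [← hRBunion, Finset.sum_union hRBdisj, Finset.sum_union hRBdisj]
      _ = _ := by
          rw [hRsum, hRsum, hBsum, hBsum]
          have e1 : ∀ x : ℕ, ∑ b ∈ Rset, G x b = ∑ j ∈ Finset.Icc 1 s, G x (l j) :=
            fun x => hRsum _
          have e2 : ∀ x : ℕ, ∑ b ∈ Bset, G x b = ∑ j ∈ Finset.Icc 1 (n - s), G x (m j) :=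
            fun x => hBsum _
          rw [Finset.sum_congr rfl fun i _ => e1 (l i), Finset.sum_congr rfl fun i _ => e2 (l i),
            Finset.sum_congr rfl fun i _ => e1 (m i), Finset.sum_congr rfl fun i _ => e2 (m i)]
          ring
  -- pointwise evaluation: red-red
  have hS1 : ∀ i ∈ Finset.Icc 1 s, ∀ j ∈ Finset.Icc 1 s,
      G (l i) (l j) = if j < i then ν j - ν i else 0 := by
    intro i hi j hj
    have hi' := Finset.mem_Icc.mp hi
    have hj' := Finset.mem_Icc.mp hj
    have hv : κ (l i) - κ (l j) - 1 = ((i:ℤ) - j - 1) + ((ν j : ℤ) - ν i) * n := by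
      rw [hκl i hi'.1 hi'.2, hκl j hj'.1 hj'.2]; ring
    have hN : (0:ℤ) < n := by exact_mod_cast hn
    simp only [hG]
    rcases Nat.lt_or_ge j i with hji | hji
    · have hdiv : (κ (l i) - κ (l j) - 1) / (n:ℤ) = (ν j : ℤ) - ν i := by
        rw [hv]
        exact ediv_eval1 _ _ _ hN (by omega) (by
          have : i ≤ n := le_trans hi'.2 hsn
          omega)
      rw [hdiv, if_pos hji,
        if_pos (by exact_mod_cast (hl_le_iff i hi j hj).mpr (le_of_lt hji) : ((l j : ℤ) ≤ (l i : ℤ)))]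
      have := hνanti j i (le_of_lt hji)
      omega
    · have hdiv : (κ (l i) - κ (l j) - 1) / (n:ℤ) = (ν j : ℤ) - ν i - 1 := by
        rw [hv]
        have := ediv_eval2 (n:ℤ) ((i:ℤ) - j - 1) ((ν j : ℤ) - ν i) hN
          (by
            have : j ≤ n := le_trans hj'.2 hsn
            omega) (by omega)
        omega
      have hnu := hνanti i j hji
      rcases Nat.eq_or_lt_of_le hji with heq | hlt
      · subst heq
        rw [hdiv, if_pos (le_refl ((l i : ℤ))), if_neg (lt_irrefl i)]
        omega
      · rw [hdiv, if_neg (show ¬ ((l j : ℤ) ≤ (l i : ℤ)) from fun hc => by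
            have h2 : l j ≤ l i := by exact_mod_cast hc
            have h3 : j ≤ i := (hl_le_iff i hi j hj).mp h2
            omega), if_neg (show ¬ j < i by omega)]
        omega
  -- pointwise evaluation: red-blue is zero
  have hS2 : ∀ i ∈ Finset.Icc 1 s, ∀ j ∈ Finset.Icc 1 (n - s), G (l i) (m j) = 0 := by
    intro i hi j hj
    have hi' := Finset.mem_Icc.mp hi
    have hj' := Finset.mem_Icc.mp hj
    have hN : (0:ℤ) < n := by exact_mod_cast hn
    have hv : κ (l i) - κ (m j) - 1 = ((i:ℤ) - j - s - 1) + (-(ν i : ℤ)) * n := by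
      rw [hκl i hi'.1 hi'.2, hκm j hj'.1 hj'.2]; ring
    have hdiv : (κ (l i) - κ (m j) - 1) / (n:ℤ) = -(ν i : ℤ) - 1 := by
      rw [hv]
      exact ediv_eval2 _ _ _ hN (by
        have h1 : j + s ≤ n := by omega
        have h2 : (j:ℤ) + s ≤ n := by exact_mod_cast h1
        omega) (by
        have : i ≤ s := hi'.2
        omega)
    simp only [hG]
    rw [hdiv]
    have : 1 ≤ ν i := hνpos i hi'.2
    split <;> omega
  -- pointwise evaluation: blue-red
  have hS3 : ∀ i ∈ Finset.Icc 1 (n - s), ∀ j ∈ Finset.Icc 1 s,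
      G (m i) (l j) = ν j + (if m i < l j then 1 else 0) := by
    intro i hi j hj
    have hi' := Finset.mem_Icc.mp hi
    have hj' := Finset.mem_Icc.mp hj
    have hN : (0:ℤ) < n := by exact_mod_cast hn
    have hv : κ (m i) - κ (l j) - 1 = ((i:ℤ) + s - j - 1) + (ν j : ℤ) * n := by
      rw [hκm i hi'.1 hi'.2, hκl j hj'.1 hj'.2]; ring
    have hdiv : (κ (m i) - κ (l j) - 1) / (n:ℤ) = (ν j : ℤ) := by
      rw [hv]
      exact ediv_eval1 _ _ _ hN (by
        have : (j:ℤ) ≤ s := by exact_mod_cast hj'.2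
        omega) (by
        have h1 : i + s ≤ n := by omega
        have h2 : (i:ℤ) + s ≤ n := by exact_mod_cast h1
        omega)
    simp only [hG]
    rw [hdiv]
    by_cases hml : l j ≤ m i
    · rw [if_pos (by exact_mod_cast hml : ((l j : ℤ) ≤ (m i : ℤ))), if_neg (by omega)]
      omega
    · rw [if_neg (by
        intro hc
        exact hml (by exact_mod_cast hc)), if_pos (by omega)]
      omega
  -- pointwise evaluation: blue-blue
  have hrowiff : ∀ i ∈ Finset.Icc 1 (n - s), ∀ j ∈ Finset.Icc 1 (n - s),
      ((j < i ∧ m i < m j) ↔ rowOf (m i) < rowOf (m j)) := by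
    intro i hi j hj
    constructor
    · rintro ⟨hji, hmm⟩
      rcases (hmorder j hj i hi).mp hji with h | h
      · exact h
      · omega
    · intro h
      have hmm : m i < m j := by
        by_contra hc
        push_neg at hc
        exact absurd (hrowmono _ _ hc) (by omega)
      exact ⟨(hmorder j hj i hi).mpr (Or.inl h), hmm⟩
  have hS4 : ∀ i ∈ Finset.Icc 1 (n - s), ∀ j ∈ Finset.Icc 1 (n - s),
      G (m i) (m j) = if rowOf (m i) < rowOf (m j) then 1 else 0 := by
    intro i hi j hj
    have hi' := Finset.mem_Icc.mp hi
    have hj' := Finset.mem_Icc.mp hj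
    have hN : (0:ℤ) < n := by exact_mod_cast hn
    have hstep : G (m i) (m j) = if j < i ∧ m i < m j then 1 else 0 := by
      have hv : κ (m i) - κ (m j) - 1 = ((i:ℤ) - j - 1) + 0 * (n:ℤ) := by
        rw [hκm i hi'.1 hi'.2, hκm j hj'.1 hj'.2]; ring
      simp only [hG]
      rcases Nat.lt_or_ge j i with hji | hji
      · have hdiv : (κ (m i) - κ (m j) - 1) / (n:ℤ) = 0 := by
          rw [hv]
          exact ediv_eval1 _ _ _ hN (by omega) (by omega)
        rw [hdiv]
        by_cases hml : m j ≤ m i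
        · rw [if_pos (by exact_mod_cast hml : ((m j : ℤ) ≤ (m i : ℤ))),
            if_neg (show ¬ (j < i ∧ m i < m j) from fun hc => by omega)]
          omega
        · rw [if_neg (fun hc => hml (by exact_mod_cast hc)),
            if_pos (show j < i ∧ m i < m j from ⟨hji, by omega⟩)]
          omega
      · have hdiv : (κ (m i) - κ (m j) - 1) / (n:ℤ) = -1 := by
          rw [hv]
          have := ediv_eval2 (n:ℤ) ((i:ℤ) - j - 1) 0 hN (by omega) (by omega)
          omega
        rw [hdiv, if_neg (show ¬ (j < i ∧ m i < m j) from fun hc => absurd hc.1 (by omega))]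
        split <;> omega
    rw [hstep]
    by_cases h : rowOf (m i) < rowOf (m j)
    · rw [if_pos ((hrowiff i hi j hj).mpr h), if_pos h]
    · rw [if_neg (fun hc => h ((hrowiff i hi j hj).mp hc)), if_neg h]
  -- rewrite the four sums
  have hsum1 : ∑ i ∈ Finset.Icc 1 s, ∑ j ∈ Finset.Icc 1 s, G (l i) (l j)
      = ∑ i ∈ Finset.Icc 1 s, ∑ j ∈ Finset.Icc 1 s, (if j < i then ν j - ν i else 0) :=
    Finset.sum_congr rfl fun i hi => Finset.sum_congr rfl fun j hj => hS1 i hi j hj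
  have hsum2 : ∑ i ∈ Finset.Icc 1 s, ∑ j ∈ Finset.Icc 1 (n - s), G (l i) (m j) = 0 :=
    Finset.sum_eq_zero fun i hi => Finset.sum_eq_zero fun j hj => hS2 i hi j hj
  have hsum3 : ∑ i ∈ Finset.Icc 1 (n - s), ∑ j ∈ Finset.Icc 1 s, G (m i) (l j)
      = ∑ i ∈ Finset.Icc 1 (n - s), ∑ j ∈ Finset.Icc 1 s, (ν j + if m i < l j then 1 else 0) :=
    Finset.sum_congr rfl fun i hi => Finset.sum_congr rfl fun j hj => hS3 i hi j hj
  have hsum4 : ∑ i ∈ Finset.Icc 1 (n - s), ∑ j ∈ Finset.Icc 1 (n - s), G (m i) (m j)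
      = ∑ i ∈ Finset.Icc 1 (n - s), ∑ j ∈ Finset.Icc 1 (n - s),
          (if rowOf (m i) < rowOf (m j) then 1 else 0) :=
    Finset.sum_congr rfl fun i hi => Finset.sum_congr rfl fun j hj => hS4 i hi j hj
  -- the red-red sum, in ℤ
  have hνsumZ : ∑ i ∈ Finset.Icc 1 s, ((ν i : ℤ)) = (n : ℤ) := by
    exact_mod_cast congrArg (Nat.cast : ℕ → ℤ) hνsum
  have hνsqZ : ∑ i ∈ Finset.Icc 1 s, (2 * (i:ℤ) - 1) * ν i = ∑ j, (lam j : ℤ) ^ 2 := by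
    have := congrArg (Nat.cast : ℕ → ℤ) hνsq
    push_cast at this
    rw [← this]
    refine Finset.sum_congr rfl fun i hi => ?_
    have hi' := (Finset.mem_Icc.mp hi).1
    have : ((2 * i - 1 : ℕ) : ℤ) = 2 * (i:ℤ) - 1 := by omega
    rw [this]
  have key1 : ((∑ i ∈ Finset.Icc 1 s, ∑ j ∈ Finset.Icc 1 s,
        if j < i then ν j - ν i else 0 : ℕ) : ℤ)
      = (s:ℤ) * n - ∑ j, (lam j : ℤ) ^ 2 := by
    have hcast : ((∑ i ∈ Finset.Icc 1 s, ∑ j ∈ Finset.Icc 1 s,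
          if j < i then ν j - ν i else 0 : ℕ) : ℤ)
        = ∑ i ∈ Finset.Icc 1 s, ∑ j ∈ Finset.Icc 1 s,
            (if j < i then (ν j : ℤ) - ν i else 0) := by
      push_cast
      refine Finset.sum_congr rfl fun i _ => Finset.sum_congr rfl fun j _ => ?_
      split
      · next h => have := hνanti j i (le_of_lt h); omega
      · rfl
    rw [hcast]
    have hstep : ∀ i ∈ Finset.Icc 1 s,
        ∑ j ∈ Finset.Icc 1 s, (if j < i then (ν j : ℤ) - ν i else 0)
        = (∑ j ∈ Finset.Icc 1 s, (if j < i then (ν j : ℤ) else 0))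
          - (i - 1 : ℤ) * ν i := by
      intro i hi
      have hi' := Finset.mem_Icc.mp hi
      have h1 : ∑ j ∈ Finset.Icc 1 s, (if j < i then (ν j : ℤ) - ν i else 0)
          = (∑ j ∈ Finset.Icc 1 s, (if j < i then (ν j : ℤ) else 0))
            - ∑ j ∈ Finset.Icc 1 s, (if j < i then (ν i : ℤ) else 0) := by
        rw [← Finset.sum_sub_distrib]
        refine Finset.sum_congr rfl fun j _ => ?_
        split <;> ring
      rw [h1]
      congr 1
      rw [← Finset.sum_filter,
        (by ext x; simp only [Finset.mem_filter, Finset.mem_Icc]; omega :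
          (Finset.Icc 1 s).filter (fun x => x < i) = Finset.Icc 1 (i - 1)),
        Finset.sum_const, Nat.card_Icc, nsmul_eq_mul]
      congr 1
      omega
    calc ∑ i ∈ Finset.Icc 1 s, ∑ j ∈ Finset.Icc 1 s, (if j < i then (ν j : ℤ) - ν i else 0)
        = ∑ i ∈ Finset.Icc 1 s, ((∑ j ∈ Finset.Icc 1 s, (if j < i then (ν j : ℤ) else 0))
            - (i - 1 : ℤ) * ν i) := Finset.sum_congr rfl hstep
      _ = (∑ i ∈ Finset.Icc 1 s, ∑ j ∈ Finset.Icc 1 s, (if j < i then (ν j : ℤ) else 0))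
          - ∑ i ∈ Finset.Icc 1 s, (i - 1 : ℤ) * ν i := Finset.sum_sub_distrib _ _
      _ = (∑ j ∈ Finset.Icc 1 s, ((s:ℤ) - j) * ν j)
          - ∑ i ∈ Finset.Icc 1 s, (i - 1 : ℤ) * ν i := by
          congr 1
          rw [Finset.sum_comm]
          refine Finset.sum_congr rfl fun j hj => ?_
          have hj' := Finset.mem_Icc.mp hj
          rw [← Finset.sum_filter,
            (by ext x; simp only [Finset.mem_filter, Finset.mem_Icc]; omega :
              (Finset.Icc 1 s).filter (fun x => j < x) = Finset.Icc (j + 1) s),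
            Finset.sum_const, Nat.card_Icc, nsmul_eq_mul]
          have : ((s + 1 - (j + 1) : ℕ) : ℤ) = (s:ℤ) - j := by omega
          rw [this]
      _ = (s:ℤ) * (∑ i ∈ Finset.Icc 1 s, (ν i : ℤ))
          - ∑ i ∈ Finset.Icc 1 s, (2 * (i:ℤ) - 1) * ν i := by
          rw [Finset.mul_sum, ← Finset.sum_sub_distrib, ← Finset.sum_sub_distrib]
          refine Finset.sum_congr rfl fun i _ => ?_
          ring
      _ = (s:ℤ) * n - ∑ j, (lam j : ℤ) ^ 2 := by rw [hνsumZ, hνsqZ]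
  -- blue-red sum splits
  have hsum3' : ∑ i ∈ Finset.Icc 1 (n - s), ∑ j ∈ Finset.Icc 1 s,
        (ν j + if m i < l j then 1 else 0)
      = (n - s) * n + ∑ i ∈ Finset.Icc 1 (n - s), ∑ j ∈ Finset.Icc 1 s,
          (if m i < l j then 1 else 0) := by
    have hinner : ∀ i, ∑ j ∈ Finset.Icc 1 s, (ν j + if m i < l j then 1 else 0)
        = n + ∑ j ∈ Finset.Icc 1 s, (if m i < l j then 1 else 0) := by
      intro i
      rw [Finset.sum_add_distrib, hνsum]
    calc ∑ i ∈ Finset.Icc 1 (n - s), ∑ j ∈ Finset.Icc 1 s, (ν j + if m i < l j then 1 else 0)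
        = ∑ i ∈ Finset.Icc 1 (n - s),
            (n + ∑ j ∈ Finset.Icc 1 s, (if m i < l j then 1 else 0)) :=
          Finset.sum_congr rfl fun i _ => hinner i
      _ = _ := by
          rw [Finset.sum_add_distrib, Finset.sum_const, Nat.card_Icc, smul_eq_mul]
          have he : n - s + 1 - 1 = n - s := by omega
          rw [he]
  -- disjointness for biUnion sums
  have hpdBlue : (↑(Finset.range r) : Set ℕ).PairwiseDisjoint Blue :=
    fun a _ b _ hab => Disjoint.mono (hBlueSub a) (hBlueSub b) (hRowdisj a b hab)
  have hpdRed : (↑(Finset.range r) : Set ℕ).PairwiseDisjoint Red :=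
    fun a _ b _ hab => Disjoint.mono (hRedSub a) (hRedSub b) (hRowdisj a b hab)
  -- the blue-red interleaving count
  have hT : ∑ i ∈ Finset.Icc 1 (n - s), ∑ j ∈ Finset.Icc 1 s, (if m i < l j then 1 else 0)
      = ∑ k ∈ Finset.range r, ∑ k' ∈ Finset.range r,
          (if k < k' then (Blue k).card * (Red k').card else 0) := by
    have e1 : ∀ x : ℕ, (∑ j ∈ Finset.Icc 1 s, if x < l j then 1 else 0)
        = ∑ y ∈ Rset, (if x < y then 1 else 0) :=
      fun x => (hRsum (fun y => if x < y then 1 else 0)).symm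
    calc ∑ i ∈ Finset.Icc 1 (n - s), ∑ j ∈ Finset.Icc 1 s, (if m i < l j then 1 else 0)
        = ∑ i ∈ Finset.Icc 1 (n - s), ∑ y ∈ Rset, (if m i < y then 1 else 0) :=
          Finset.sum_congr rfl fun i _ => e1 (m i)
      _ = ∑ x ∈ Bset, ∑ y ∈ Rset, (if x < y then 1 else 0) :=
          (hBsum (fun x => ∑ y ∈ Rset, (if x < y then 1 else 0))).symm
      _ = ∑ k ∈ Finset.range r, ∑ x ∈ Blue k, ∑ y ∈ Rset, (if x < y then 1 else 0) :=
          Finset.sum_biUnion hpdBlue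
      _ = ∑ k ∈ Finset.range r, ∑ x ∈ Blue k, ∑ k' ∈ Finset.range r, ∑ y ∈ Red k',
            (if x < y then 1 else 0) := by
          refine Finset.sum_congr rfl fun k _ => Finset.sum_congr rfl fun x _ => ?_
          rw [hRset]
          exact Finset.sum_biUnion hpdRed
      _ = ∑ k ∈ Finset.range r, ∑ x ∈ Blue k, ∑ k' ∈ Finset.range r,
            (if k < k' then (Red k').card else 0) := by
          refine Finset.sum_congr rfl fun k hk => Finset.sum_congr rfl fun x hx =>
            Finset.sum_congr rfl fun k' hk' => ?_
          rw [Finset.mem_range] at hk hk'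
          by_cases hkk : k < k'
          · rw [if_pos hkk]
            rw [Finset.sum_congr rfl fun y hy => if_pos ((hblt k k' x y hk hk' hx hy).mpr hkk)]
            simp
          · rw [if_neg hkk]
            exact Finset.sum_eq_zero fun y hy =>
              if_neg (fun hlt => hkk ((hblt k k' x y hk hk' hx hy).mp hlt))
      _ = ∑ k ∈ Finset.range r, ∑ k' ∈ Finset.range r,
            (if k < k' then (Blue k).card * (Red k').card else 0) := by
          refine Finset.sum_congr rfl fun k _ => ?_
          rw [Finset.sum_const, smul_eq_mul, Finset.mul_sum]
          refine Finset.sum_congr rfl fun k' _ => ?_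
          by_cases hkk : k < k'
          · rw [if_pos hkk, if_pos hkk]
          · rw [if_neg hkk, if_neg hkk, mul_zero]
  -- the blue-blue count
  have hrowblue : ∀ k, k < r → ∀ x ∈ Blue k, rowOf x = k := by
    intro k hk x hx
    exact hrowval k hk x (hBlueSub k hx)
  have hBB : ∑ i ∈ Finset.Icc 1 (n - s), ∑ j ∈ Finset.Icc 1 (n - s),
        (if rowOf (m i) < rowOf (m j) then 1 else 0)
      = ∑ k ∈ Finset.range r, ∑ k' ∈ Finset.range r,
          (if k < k' then (Blue k).card * (Blue k').card else 0) := by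
    have e1 : ∀ x : ℕ, (∑ j ∈ Finset.Icc 1 (n - s), if rowOf x < rowOf (m j) then 1 else 0)
        = ∑ y ∈ Bset, (if rowOf x < rowOf y then 1 else 0) :=
      fun x => (hBsum (fun y => if rowOf x < rowOf y then 1 else 0)).symm
    calc ∑ i ∈ Finset.Icc 1 (n - s), ∑ j ∈ Finset.Icc 1 (n - s),
          (if rowOf (m i) < rowOf (m j) then 1 else 0)
        = ∑ i ∈ Finset.Icc 1 (n - s), ∑ y ∈ Bset, (if rowOf (m i) < rowOf y then 1 else 0) :=
          Finset.sum_congr rfl fun i _ => e1 (m i)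
      _ = ∑ x ∈ Bset, ∑ y ∈ Bset, (if rowOf x < rowOf y then 1 else 0) :=
          (hBsum (fun x => ∑ y ∈ Bset, (if rowOf x < rowOf y then 1 else 0))).symm
      _ = ∑ k ∈ Finset.range r, ∑ x ∈ Blue k, ∑ y ∈ Bset,
            (if rowOf x < rowOf y then 1 else 0) := Finset.sum_biUnion hpdBlue
      _ = ∑ k ∈ Finset.range r, ∑ x ∈ Blue k, ∑ k' ∈ Finset.range r, ∑ y ∈ Blue k',
            (if rowOf x < rowOf y then 1 else 0) := by
          refine Finset.sum_congr rfl fun k _ => Finset.sum_congr rfl fun x _ => ?_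
          rw [hBset]
          exact Finset.sum_biUnion hpdBlue
      _ = ∑ k ∈ Finset.range r, ∑ x ∈ Blue k, ∑ k' ∈ Finset.range r,
            (if k < k' then (Blue k').card else 0) := by
          refine Finset.sum_congr rfl fun k hk => Finset.sum_congr rfl fun x hx =>
            Finset.sum_congr rfl fun k' hk' => ?_
          rw [Finset.mem_range] at hk hk'
          have hrx : rowOf x = k := hrowblue k hk x hx
          by_cases hkk : k < k'
          · rw [if_pos hkk]
            rw [Finset.sum_congr rfl fun y hy => if_pos (by
              rw [hrx, hrowblue k' hk' y hy]; exact hkk)]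
            simp
          · rw [if_neg hkk]
            exact Finset.sum_eq_zero fun y hy => if_neg (by
              rw [hrx, hrowblue k' hk' y hy]; exact hkk)
      _ = ∑ k ∈ Finset.range r, ∑ k' ∈ Finset.range r,
            (if k < k' then (Blue k).card * (Blue k').card else 0) := by
          refine Finset.sum_congr rfl fun k _ => ?_
          rw [Finset.sum_const, smul_eq_mul, Finset.mul_sum]
          refine Finset.sum_congr rfl fun k' _ => ?_
          by_cases hkk : k < k'
          · rw [if_pos hkk, if_pos hkk]
          · rw [if_neg hkk, if_neg hkk, mul_zero]
  -- the right-hand sum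
  have hRHS : ∑ p ∈ (Finset.range r ×ˢ Finset.range r).filter (fun p => p.2 < p.1),
        (Row p.1).card * (Blue p.2).card
      = (∑ k ∈ Finset.range r, ∑ k' ∈ Finset.range r,
          (if k < k' then (Blue k).card * (Red k').card else 0))
        + (∑ k ∈ Finset.range r, ∑ k' ∈ Finset.range r,
          (if k < k' then (Blue k).card * (Blue k').card else 0)) := by
    rw [Finset.sum_filter, Finset.sum_product, Finset.sum_comm, ← Finset.sum_add_distrib]
    refine Finset.sum_congr rfl fun k _ => ?_
    rw [← Finset.sum_add_distrib]
    refine Finset.sum_congr rfl fun k' _ => ?_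
    by_cases h : k < k'
    · rw [if_pos h, if_pos h, if_pos h, ← hcardRB k']
      ring
    · rw [if_neg h, if_neg h, if_neg h]
      omega
  -- bounding the sum of squares
  have hle : ∑ i, lam i ^ 2 ≤ n ^ 2 := by
    calc ∑ i, lam i ^ 2 ≤ ∑ i, lam i * n := by
          refine Finset.sum_le_sum fun i _ => ?_
          rw [pow_two]
          exact Nat.mul_le_mul_left _ (hlam_le_n i)
      _ = (∑ i, lam i) * n := by rw [Finset.sum_mul]
      _ = n * n := by rw [hsum]
      _ = n ^ 2 := (sq n).symm
  -- the key numeric identity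
  have hkey : (∑ i ∈ Finset.Icc 1 s, ∑ j ∈ Finset.Icc 1 s, if j < i then ν j - ν i else 0)
      + (n - s) * n = n ^ 2 - ∑ i, lam i ^ 2 := by
    have hgoal : (((∑ i ∈ Finset.Icc 1 s, ∑ j ∈ Finset.Icc 1 s,
          if j < i then ν j - ν i else 0) + (n - s) * n : ℕ) : ℤ)
        = ((n ^ 2 - ∑ i, lam i ^ 2 : ℕ) : ℤ) := by
      rw [Nat.cast_add, Nat.cast_mul, Nat.cast_sub hsn, Nat.cast_sub hle, key1]
      push_cast
      ring
    exact_mod_cast hgoal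
  -- final assembly
  rw [hsplit, hsum1, hsum2, hsum3, hsum4, hsum3', hT, hBB, hRHS]
  calc (∑ i ∈ Finset.Icc 1 s, ∑ j ∈ Finset.Icc 1 s, if j < i then ν j - ν i else 0) + 0
      + (((n - s) * n
          + ∑ k ∈ Finset.range r, ∑ k' ∈ Finset.range r,
              (if k < k' then (Blue k).card * (Red k').card else 0))
        + ∑ k ∈ Finset.range r, ∑ k' ∈ Finset.range r,
              (if k < k' then (Blue k).card * (Blue k').card else 0))
      = ((∑ i ∈ Finset.Icc 1 s, ∑ j ∈ Finset.Icc 1 s, if j < i then ν j - ν i else 0)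
          + (n - s) * n)
        + ((∑ k ∈ Finset.range r, ∑ k' ∈ Finset.range r,
              (if k < k' then (Blue k).card * (Red k').card else 0))
          + ∑ k ∈ Finset.range r, ∑ k' ∈ Finset.range r,
              (if k < k' then (Blue k).card * (Blue k').card else 0)) := by ring
    _ = _ := by rw [hkey]
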